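/- On the Lie algebra g_{6,54}^{0,-1} with structure equations (e^{16}+e^{35}, -e^{26}+e^{45}, e^{36}, -e^{46}, 0, 0), the pair F = e^{14} + e^{23} + e^{56} and ρ = e^{125} - e^{136} + e^{246} + e^{345} satisfies: dF = 0, dρ = 0, F∧F∧F ≠ 0, and F∧ρ = 0. -/

import Mathlib

open ExteriorAlgebra

noncomputable section

/-- The exterior algebra Λ*(g*) of a 6-dimensional real Lie algebra g,
    identified with the exterior algebra on ℝ^6. -/
abbrev E6 : Type := ExteriorAlgebra ℝ (Fin 6 → ℝ)

/-- The basis 1-forms e^1, ..., e^6 (0-indexed). -/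
def e (i : Fin 6) : E6 := ι ℝ (Pi.single i 1)

/-- Structure equations: d of the basis 1-forms. -/
def d1 : Fin 6 → E6 :=
  ![e 0 * e 5 + e 2 * e 4,
    -(e 1 * e 5) + e 3 * e 4,
    e 2 * e 5,
    -(e 3 * e 5),
    0,
    0]

/-- Leibniz: d(e^i ∧ e^j) = de^i ∧ e^j - e^i ∧ de^j. -/
def d2 (i j : Fin 6) : E6 := d1 i * e j - e i * d1 j

/-- Leibniz: d(e^i ∧ e^j ∧ e^k) = de^i ∧ e^j ∧ e^k - e^i ∧ de^j ∧ e^k + e^i ∧ e^j ∧ de^k. -/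
def d3 (i j k : Fin 6) : E6 := d1 i * e j * e k - e i * d1 j * e k + e i * e j * d1 k

/-- F. -/
def F : E6 := e 0 * e 3 + e 1 * e 2 + e 4 * e 5

/-- dF via the Leibniz rule. -/
def dF : E6 := d2 0 3 + d2 1 2 + d2 4 5

/-- ρ. -/
def ρ : E6 := e 0 * e 1 * e 4 - e 0 * e 2 * e 5 + e 1 * e 3 * e 5 + e 2 * e 3 * e 4

/-- dρ via the Leibniz rule. -/
def dρ : E6 := d3 0 1 4 - d3 0 2 5 + d3 1 3 5 + d3 2 3 4

lemma d1_0 : d1 0 = e 0 * e 5 + e 2 * e 4 := rfl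
lemma d1_1 : d1 1 = -(e 1 * e 5) + e 3 * e 4 := rfl
lemma d1_2 : d1 2 = e 2 * e 5 := rfl
lemma d1_3 : d1 3 = -(e 3 * e 5) := rfl
lemma d1_4 : d1 4 = 0 := rfl
lemma d1_5 : d1 5 = 0 := rfl

lemma e_sq (i : Fin 6) : e i * e i = 0 := ι_sq_zero _

lemma e_swap (i j : Fin 6) (_h : j < i) : e i * e j = -(e j * e i) :=
  eq_neg_of_add_eq_zero_left (ι_add_mul_swap _ _)

lemma e_sq' (i : Fin 6) (x : E6) : e i * (e i * x) = 0 := by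
  rw [← mul_assoc, e_sq, zero_mul]

lemma e_swap' (i j : Fin 6) (x : E6) (h : j < i) : e i * (e j * x) = -(e j * (e i * x)) := by
  rw [← mul_assoc, e_swap i j h, neg_mul, mul_assoc]

lemma hdF : dF = 0 := by
  simp [dF, d2, d1_0, d1_1, d1_2, d1_3, d1_4, d1_5, mul_add, add_mul, sub_mul, mul_sub, mul_assoc,
    e_sq, e_sq', e_swap, e_swap']

lemma hdρ : dρ = 0 := by
  simp [dρ, d3, d1_0, d1_1, d1_2, d1_3, d1_4, d1_5, mul_add, add_mul, sub_mul, mul_sub, mul_assoc,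
    e_sq, e_sq', e_swap, e_swap']

lemma hFρ : F * ρ = 0 := by
  simp [F, ρ, mul_add, add_mul, sub_mul, mul_sub, mul_assoc,
    e_sq, e_sq', e_swap, e_swap']

lemma hF3 : F * F * F = (6 : ℝ) • ιMulti ℝ 6 (fun i => Pi.single i 1) := by
  have : ιMulti ℝ 6 (fun i : Fin 6 => (Pi.single i 1 : Fin 6 → ℝ)) =
      e 0 * (e 1 * (e 2 * (e 3 * (e 4 * (e 5 * 1))))) := by
    rw [ιMulti_apply]
    simp only [List.ofFn_succ, List.prod_cons, List.ofFn_zero, List.prod_nil, mul_one, e]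
    rfl
  rw [this]
  simp only [F, mul_add, add_mul, mul_assoc, e_sq, e_sq', e_swap, e_swap', smul_add, smul_neg,
    mul_zero, zero_mul, mul_neg, neg_mul, mul_one]
  simp [mul_add, add_mul, mul_assoc, e_sq, e_sq', e_swap, e_swap', mul_neg, neg_mul]
  module

/-- the family of alternating maps: determinant in degree 6, zero elsewhere -/
def detf : ∀ i : ℕ, (Fin 6 → ℝ) [⋀^Fin i]→ₗ[ℝ] ℝ := fun i =>
  if h : i = 6 then h ▸ Matrix.detRowAlternating else 0

set_option maxRecDepth 4000 in
lemma hF3ne : F * F * F ≠ 0 := by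
  intro h
  have := congrArg (liftAlternating (R := ℝ) (M := Fin 6 → ℝ) (N := ℝ) detf) h
  rw [hF3, map_smul, map_zero, liftAlternating_apply_ιMulti] at this
  have hd : detf 6 = Matrix.detRowAlternating := by simp [detf]
  rw [hd] at this
  have h6 : Matrix.detRowAlternating (fun i : Fin 6 => (Pi.single i 1 : Fin 6 → ℝ)) = 1 := by
    rw [← Pi.basisFun_det]
    have hb : (fun i : Fin 6 => (Pi.single i 1 : Fin 6 → ℝ)) = ⇑(Pi.basisFun ℝ (Fin 6)) := by
      funext i
      simp [Pi.basisFun_apply]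
    rw [hb, Module.Basis.det_self]
  rw [h6] at this
  norm_num at this

/-- Symplectic half-flat structure on g_{6,54}^{0,-1}. -/
theorem stmt5 : dF = 0 ∧ dρ = 0 ∧ F * F * F ≠ 0 ∧ F * ρ = 0 :=
  ⟨hdF, hdρ, hF3ne, hFρ⟩
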